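/- For any tree T and any integer t ≥ 3, if G and G' are two n-vertex graphs, each of girth greater than |V(T)| and each having at least n-1 vertices of degree t-1 with the remaining vertex (if any) of degree t-1 or t-2, then the number of copies of T in G equals the number of copies of T in G'. -/

import Mathlib

open SimpleGraph Finset

/-- `G` contains a copy of `F`. -/
def Graph.Contains {α β : Type*} (F : SimpleGraph α) (G : SimpleGraph β) : Prop :=
  ∃ f : α ↪ β, ∀ ⦃a b : α⦄, F.Adj a b → G.Adj (f a) (f b)

/-- The number of subgraphs of `G` isomorphic to `H`, i.e. `N(H, G)`. -/
noncomputable def Graph.copyCount {α β : Type*} (H : SimpleGraph α) (G : SimpleGraph β) : ℕ :=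
  Set.ncard {G' : G.Subgraph | Nonempty (H ≃g G'.coe)}

/-- The join `G + G'` of two graphs. -/
def Graph.join {α β : Type*} (G : SimpleGraph α) (H : SimpleGraph β) :
    SimpleGraph (α ⊕ β) where
  Adj x y :=
    match x, y with
    | Sum.inl a, Sum.inl b => G.Adj a b
    | Sum.inr a, Sum.inr b => H.Adj a b
    | Sum.inl _, Sum.inr _ => True
    | Sum.inr _, Sum.inl _ => True
  symm := ⟨by rintro (a | a) (b | b) h <;> simp_all <;> exact h.symm⟩
  loopless := ⟨by rintro (a | a) h <;> simp_all⟩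

/-- `s` is the minimum size of a color class over proper `(r+1)`-colorings of `F` (σ(F) = s). -/
def Graph.IsSigma {α : Type*} (F : SimpleGraph α) (r s : ℕ) : Prop :=
  IsLeast {k : ℕ | ∃ (C : F.Coloring (Fin (r + 1))) (i : Fin (r + 1)),
    k = {v | C v = i}.ncard} s


set_option linter.unusedSectionVars false
set_option maxHeartbeats 1000000

section MyEngine

variable {β : Type*} [Fintype β] [DecidableEq β] {T : SimpleGraph β} {n : ℕ}
  {G G' : SimpleGraph (Fin n)} {j₀ : Fin n} [DecidableRel T.Adj] [DecidableRel G.Adj]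
  [DecidableRel G'.Adj]

def myPE (T : SimpleGraph β) (G : SimpleGraph (Fin n)) (j₀ : Fin n) (s : Finset β)
    (f : β → Fin n) : Prop :=
  Set.InjOn f ↑s ∧ (∀ a ∈ s, ∀ b ∈ s, T.Adj a b → G.Adj (f a) (f b)) ∧ ∀ x ∉ s, f x = j₀

def myConn (T : SimpleGraph β) (s : Finset β) : Prop :=
  ∀ a ∈ s, ∀ b ∈ s, ∃ w : T.Walk a b, ∀ x ∈ w.support, x ∈ s


lemma my_split (P Q : (β → Fin n) → Prop) :
    Nat.card {f : β → Fin n // P f} =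
      Nat.card {f : β → Fin n // P f ∧ Q f} + Nat.card {f : β → Fin n // P f ∧ ¬ Q f} := by
  classical
  rw [Nat.card_congr (Equiv.sumCompl (fun f : {f : β → Fin n // P f} => Q f.1)).symm,
    Nat.card_sum]
  congr 1
  · exact Nat.card_congr (Equiv.subtypeSubtypeEquivSubtypeInter P Q)
  · exact Nat.card_congr (Equiv.subtypeSubtypeEquivSubtypeInter P (fun f => ¬ Q f))

lemma my_card_singleton (x : β) : Nat.card {f : β → Fin n // myPE T G j₀ {x} f} = n := by
  classical
  have e : {f : β → Fin n // myPE T G j₀ {x} f} ≃ Fin n := by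
    refine ⟨fun f => f.1 x, fun a => ⟨fun y => if y = x then a else j₀, ?_, ?_, ?_⟩, ?_, ?_⟩
    · intro y hy z hz hyz
      simp only [coe_singleton, Set.mem_singleton_iff] at hy hz; rw [hy, hz]
    · intro a ha b hb hadj
      simp only [mem_singleton] at ha hb
      subst ha; subst hb; exact absurd hadj (T.irrefl)
    · intro y hy; simp only [mem_singleton] at hy; simp [hy]
    · rintro ⟨f, hinj, hadj, hjunk⟩
      apply Subtype.ext
      funext y
      by_cases hy : y = x
      · simp [hy]
      · simp only [hy, if_false]
        exact (hjunk y (by simp [hy])).symm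
    · intro a; simp
  rw [Nat.card_congr e]; simp

lemma my_card_singleton_w (x : β) (w : Fin n) :
    Nat.card {f : β → Fin n // myPE T G j₀ {x} f ∧ f x = w} = 1 := by
  classical
  have e : {f : β → Fin n // myPE T G j₀ {x} f ∧ f x = w} ≃ Unit := by
    refine ⟨fun _ => Unit.unit, fun _ => ⟨fun y => if y = x then w else j₀, ⟨?_, ?_, ?_⟩, by simp⟩,
      ?_, fun a => rfl⟩
    · intro y hy z hz hyz
      simp only [coe_singleton, Set.mem_singleton_iff] at hy hz; rw [hy, hz]
    · intro a ha b hb hadj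
      simp only [mem_singleton] at ha hb
      subst ha; subst hb; exact absurd hadj (T.irrefl)
    · intro y hy; simp only [mem_singleton] at hy; simp [hy]
    · rintro ⟨f, ⟨hinj, hadj, hjunk⟩, hfx⟩
      apply Subtype.ext
      funext y
      by_cases hy : y = x
      · subst hy; simp [hfx]
      · simp only [hy, if_false]
        exact (hjunk y (by simp [hy])).symm
  rw [Nat.card_congr e]; simp

lemma my_mapWalk {s : Finset β} {f : β → Fin n}
    (hpres : ∀ a ∈ s, ∀ b ∈ s, T.Adj a b → G.Adj (f a) (f b)) :
    ∀ {a b : β} (Q : T.Walk a b), (∀ x ∈ Q.support, x ∈ s) →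
      ∃ R : G.Walk (f a) (f b), R.length = Q.length ∧ R.support = Q.support.map f ∧
        R.edges = Q.edges.map (Sym2.map f) := by
  intro a b Q
  induction Q with
  | nil => intro _; exact ⟨SimpleGraph.Walk.nil, by simp⟩
  | @cons a c b h Q' ih =>
    intro hsupp
    have ha : a ∈ s := hsupp a (by simp)
    have hc : c ∈ s := hsupp c (by simp [SimpleGraph.Walk.support_cons])
    obtain ⟨R', h1, h2, h3⟩ := ih (fun x hx => hsupp x (by simp [SimpleGraph.Walk.support_cons, hx]))
    exact ⟨SimpleGraph.Walk.cons (hpres a ha c hc h) R', by simp [h1, h2, h3]⟩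

lemma my_girth_adj (hg : (Fintype.card β : ℕ∞) < G.egirth) {s : Finset β} {f : β → Fin n}
    (hinj : Set.InjOn f ↑s)
    (hpres : ∀ a ∈ s, ∀ b ∈ s, T.Adj a b → G.Adj (f a) (f b))
    (hconn : myConn T s) {p x : β} (hp : p ∈ s) (hx : x ∈ s)
    (hadj : G.Adj (f p) (f x)) : T.Adj p x := by
  by_contra hTadj
  have hxp : x ≠ p := by rintro rfl; exact hadj.ne' rfl
  obtain ⟨W, hW⟩ := hconn x hx p hp
  set Q := W.bypass with hQ
  have hQpath : Q.IsPath := W.bypass_isPath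
  have hQsupp : ∀ y ∈ Q.support, y ∈ s := fun y hy => hW y (W.support_bypass_subset hy)
  obtain ⟨R, hlen, hsupp, hedges⟩ := my_mapWalk hpres Q hQsupp
  have hRpath : R.IsPath := by
    rw [SimpleGraph.Walk.isPath_def, hsupp]
    exact (hQpath.support_nodup).map_on
      (fun a ha b hb hab => hinj (hQsupp a ha) (hQsupp b hb) hab)
  have hnotmem : s(f p, f x) ∉ R.edges := by
    intro hmem
    rw [hedges, List.mem_map] at hmem
    obtain ⟨e, he, hemap⟩ := hmem
    induction e using Sym2.ind with
    | _ a b =>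
      have haS : a ∈ s := hQsupp a (Q.fst_mem_support_of_mem_edges he)
      have hbS : b ∈ s := hQsupp b (Q.snd_mem_support_of_mem_edges he)
      have hab : T.Adj a b := Q.adj_of_mem_edges he
      rw [Sym2.map_pair_eq, Sym2.eq_iff] at hemap
      rcases hemap with ⟨h1, h2⟩ | ⟨h1, h2⟩
      · exact hTadj ((hinj haS hp h1) ▸ (hinj hbS hx h2) ▸ hab)
      · exact hTadj (((hinj haS hx h1) ▸ (hinj hbS hp h2) ▸ hab).symm)
  have hcyc : (SimpleGraph.Walk.cons hadj R).IsCycle :=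
    (SimpleGraph.Walk.cons_isCycle_iff R hadj).2 ⟨hRpath, hnotmem⟩
  -- length bound
  have hlenbound : (SimpleGraph.Walk.cons hadj R).length ≤ Fintype.card β := by
    have h1 : Q.support.toFinset.card = Q.support.length := Q.support.toFinset_card_of_nodup
      hQpath.support_nodup
    have h2 : Q.support.toFinset ⊆ Finset.univ := Finset.subset_univ _
    have h3 := Finset.card_le_card h2
    rw [h1, Finset.card_univ] at h3
    rw [SimpleGraph.Walk.length_cons, hlen]
    have := Q.length_support
    omega
  have hle : G.egirth ≤ (SimpleGraph.Walk.cons hadj R).length :=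
    SimpleGraph.le_egirth.mp le_rfl _ _ hcyc
  have : G.egirth ≤ (Fintype.card β : ℕ∞) := hle.trans (by exact_mod_cast hlenbound)
  exact absurd (hg.trans_le this) (lt_irrefl _)

lemma my_unique_nbr (hT : T.IsAcyclic) {s : Finset β} (hconn : myConn T s) {u : β}
    (hu : u ∉ s) {a b : β} (ha : a ∈ s) (hb : b ∈ s) (hua : T.Adj u a) (hub : T.Adj u b) :
    a = b := by
  by_contra hne
  obtain ⟨W, hW⟩ := hconn a ha b hb
  set P := W.bypass with hPdef
  have hPpath : P.IsPath := W.bypass_isPath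
  have hPsupp : ∀ y ∈ P.support, y ∈ s := fun y hy => hW y (W.support_bypass_subset hy)
  have hunotP : u ∉ P.support := fun h => hu (hPsupp u h)
  have heq : (SimpleGraph.Walk.cons hub SimpleGraph.Walk.nil : T.Walk u b)
      = SimpleGraph.Walk.cons hua P := by
    have := hT.path_unique (SimpleGraph.Path.singleton hub)
      ⟨SimpleGraph.Walk.cons hua P, hPpath.cons hunotP⟩
    exact congrArg Subtype.val this
  have hsupp := congrArg SimpleGraph.Walk.support heq
  rw [SimpleGraph.Walk.support_cons, SimpleGraph.Walk.support_cons,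
    SimpleGraph.Walk.support_nil] at hsupp
  have hPb : P.support = [b] := by simpa using hsupp.symm
  have ha' : a ∈ P.support := P.start_mem_support
  rw [hPb] at ha'
  simp at ha'
  exact hne ha'

lemma my_conn_insert {s₀ : Finset β} (hconn : myConn T s₀) {u p : β} (hp : p ∈ s₀)
    (hadj : T.Adj p u) : myConn T (insert u s₀) := by
  have key : ∀ b ∈ s₀, ∃ w : T.Walk u b, ∀ x ∈ w.support, x ∈ insert u s₀ := by
    intro b hb
    obtain ⟨W, hW⟩ := hconn p hp b hb
    exact ⟨SimpleGraph.Walk.cons hadj.symm W, by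
      intro x hx
      rw [SimpleGraph.Walk.support_cons] at hx
      rcases List.mem_cons.mp hx with h | h
      · simp [h]
      · exact Finset.mem_insert_of_mem (hW x h)⟩
  intro a ha b hb
  rcases Finset.mem_insert.mp ha with rfl | ha' <;> rcases Finset.mem_insert.mp hb with rfl | hb'
  · exact ⟨SimpleGraph.Walk.nil, by simp⟩
  · exact key b hb'
  · obtain ⟨W, hW⟩ := key a ha'
    exact ⟨W.reverse, by simpa using hW⟩
  · obtain ⟨W, hW⟩ := hconn a ha' b hb'
    exact ⟨W, fun x hx => Finset.mem_insert_of_mem (hW x hx)⟩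

lemma my_exit {s₀ : Finset β} : ∀ {x a : β} (W : T.Walk x a), x ∈ s₀ → a ∉ s₀ →
    ∃ u p, u ∉ s₀ ∧ p ∈ s₀ ∧ T.Adj p u ∧ u ∈ W.support := by
  intro x a W
  induction W with
  | nil => intro h1 h2; exact absurd h1 h2
  | @cons x c a h W' ih =>
    intro hx ha
    by_cases hc : c ∈ s₀
    · obtain ⟨u, p, h1, h2, h3, h4⟩ := ih hc ha
      exact ⟨u, p, h1, h2, h3, by simp [SimpleGraph.Walk.support_cons, h4]⟩
    · exact ⟨c, x, hc, hx, h, by simp [SimpleGraph.Walk.support_cons]⟩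

lemma my_leaf (hT : T.IsAcyclic) {s : Finset β} (hconn : myConn T s) {x : β} (hx : x ∈ s)
    (h2 : 2 ≤ s.card) :
    ∃ u ∈ s, u ≠ x ∧ myConn T (s.erase u) ∧
      ∃ p ∈ s.erase u, T.Adj u p ∧ ∀ q ∈ s.erase u, T.Adj u q → q = p := by
  suffices aux : ∀ c : ℕ, 1 ≤ c → ∀ s₀ : Finset β, s₀ ⊆ s → x ∈ s₀ → myConn T s₀ →
      s₀.card + c = s.card → ∃ u ∈ s, u ≠ x ∧ myConn T (s.erase u) ∧
      ∃ p ∈ s.erase u, T.Adj u p ∧ ∀ q ∈ s.erase u, T.Adj u q → q = p by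
    refine aux (s.card - 1) (by omega) {x} (by simpa using hx) (by simp)
      (fun a ha b hb => ?_) (by simp; omega)
    simp only [Finset.mem_singleton] at ha hb
    subst ha; subst hb
    exact ⟨SimpleGraph.Walk.nil, by simp⟩
  intro c
  induction c with
  | zero => omega
  | succ c' ih =>
    intro _ s₀ hsub hx₀ hconn₀ hcard
    have hne : s₀ ≠ s := by intro h; rw [h] at hcard; omega
    obtain ⟨a, ha, ha'⟩ := Finset.exists_of_ssubset (lt_of_le_of_ne hsub hne)
    obtain ⟨W, hW⟩ := hconn x (hsub hx₀) a ha
    obtain ⟨u, p, hu, hp, hadj, humem⟩ := my_exit W hx₀ ha'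
    have hus : u ∈ s := hW u humem
    have hsub₁ : insert u s₀ ⊆ s := Finset.insert_subset hus hsub
    have hconn₁ : myConn T (insert u s₀) := my_conn_insert hconn₀ hp hadj
    have hcard₁ : (insert u s₀).card = s₀.card + 1 := Finset.card_insert_of_notMem hu
    rcases Nat.eq_zero_or_pos c' with rfl | hc'
    · -- insert u s₀ = s, u is the leaf
      have hs : insert u s₀ = s := Finset.eq_of_subset_of_card_le hsub₁ (by omega)
      have herase : s.erase u = s₀ := by rw [← hs, Finset.erase_insert hu]
      refine ⟨u, hus, ?_, herase ▸ hconn₀, p, herase ▸ hp, hadj.symm, ?_⟩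
      · rintro rfl; exact hu hx₀
      · intro q hq hq'
        rw [herase] at hq
        exact my_unique_nbr hT hconn₀ hu hq hp hq' hadj.symm
    · exact ih hc' (insert u s₀) hsub₁ (Finset.mem_insert_of_mem hx₀) hconn₁ (by omega)

lemma my_ext_const (hg : (Fintype.card β : ℕ∞) < G.egirth) {s : Finset β}
    (hconn : myConn T s) {u p : β} (hu : u ∉ s) (hp : p ∈ s) (hupadj : T.Adj u p)
    (huniq : ∀ q ∈ s, T.Adj u q → q = p) (Q : (β → Fin n) → Prop)
    (hQ : ∀ f a, Q (Function.update f u a) ↔ Q f) (D : ℕ)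
    (hD : ∀ g : β → Fin n, myPE T G j₀ s g → Q g → G.degree (g p) = D) :
    Nat.card {f : β → Fin n // myPE T G j₀ (insert u s) f ∧ Q f} =
      Nat.card {g : β → Fin n // myPE T G j₀ s g ∧ Q g} *
        (D - (s.filter fun q => T.Adj p q).card) := by
  classical
  set d := (s.filter fun q => T.Adj p q).card with hd
  -- the fiber of the restriction map
  set fib : (β → Fin n) → Finset (Fin n) :=
    fun g => G.neighborFinset (g p) \ s.image g with hfib
  have hinter : ∀ g : β → Fin n, myPE T G j₀ s g →
      G.neighborFinset (g p) ∩ s.image g = (s.filter fun q => T.Adj p q).image g := by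
    rintro g ⟨hg1, hg2, hg3⟩
    ext a
    simp only [Finset.mem_inter, SimpleGraph.mem_neighborFinset, Finset.mem_image,
      Finset.mem_filter]
    constructor
    · rintro ⟨hadj, x, hxs, rfl⟩
      exact ⟨x, ⟨hxs, my_girth_adj hg hg1 hg2 hconn hp hxs hadj⟩, rfl⟩
    · rintro ⟨x, ⟨hxs, hTadj⟩, rfl⟩
      exact ⟨(hg2 p hp x hxs hTadj), x, hxs, rfl⟩
  have hcard : ∀ g : β → Fin n, myPE T G j₀ s g → Q g → (fib g).card = D - d := by
    intro g hgPE hgQ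
    have h1 : fib g = G.neighborFinset (g p) \ (G.neighborFinset (g p) ∩ s.image g) := by
      rw [Finset.sdiff_inter_self_left]
    rw [h1, Finset.card_sdiff_of_subset Finset.inter_subset_left, hinter g hgPE]
    have h2 : ((s.filter fun q => T.Adj p q).image g).card = d := by
      rw [Finset.card_image_of_injOn (hgPE.1.mono (by
        intro y hy
        simp only [Finset.coe_filter, Set.mem_setOf_eq] at hy
        exact hy.1))]
    rw [h2, ← hD g hgPE hgQ]
    rfl
  -- the equivalence
  have e : {f : β → Fin n // myPE T G j₀ (insert u s) f ∧ Q f} ≃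
      Σ g : {g : β → Fin n // myPE T G j₀ s g ∧ Q g}, {a : Fin n // a ∈ fib g.1} := by
    have hpu : p ≠ u := fun h => hu (h ▸ hp)
    refine
      { toFun := fun f => ⟨⟨Function.update f.1 u j₀, ⟨?_, ?_, ?_⟩, (hQ f.1 j₀).mpr f.2.2⟩,
          ⟨f.1 u, ?_⟩⟩
        invFun := fun ga => ⟨Function.update ga.1.1 u ga.2.1, ⟨?_, ?_, ?_⟩,
          (hQ ga.1.1 ga.2.1).mpr ga.1.2.2⟩
        left_inv := ?_
        right_inv := ?_ }
    · -- InjOn of restriction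
      obtain ⟨⟨hf1, hf2, hf3⟩, hfQ⟩ := f.2
      intro y hy z hz hyz
      simp only [Finset.mem_coe] at hy hz
      have hyu : y ≠ u := fun h => hu (h ▸ hy)
      have hzu : z ≠ u := fun h => hu (h ▸ hz)
      rw [Function.update_of_ne hyu, Function.update_of_ne hzu] at hyz
      exact hf1 (by simp [hy]) (by simp [hz]) hyz
    · -- edges of restriction
      obtain ⟨⟨hf1, hf2, hf3⟩, hfQ⟩ := f.2
      intro a ha b hb hab
      have hau : a ≠ u := fun h => hu (h ▸ ha)
      have hbu : b ≠ u := fun h => hu (h ▸ hb)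
      rw [Function.update_of_ne hau, Function.update_of_ne hbu]
      exact hf2 a (Finset.mem_insert_of_mem ha) b (Finset.mem_insert_of_mem hb) hab
    · -- junk of restriction
      obtain ⟨⟨hf1, hf2, hf3⟩, hfQ⟩ := f.2
      intro y hy
      by_cases hyu : y = u
      · subst hyu; simp
      · rw [Function.update_of_ne hyu]
        exact hf3 y (by simp [hy, hyu])
    · -- f.1 u lies in the fiber finset
      obtain ⟨⟨hf1, hf2, hf3⟩, hfQ⟩ := f.2
      dsimp only
      rw [Finset.mem_sdiff, SimpleGraph.mem_neighborFinset, Function.update_of_ne hpu]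
      constructor
      · exact (hf2 u (Finset.mem_insert_self u s) p (Finset.mem_insert_of_mem hp) hupadj).symm
      · rw [Finset.mem_image]
        rintro ⟨q, hqs, hq⟩
        have hqu : q ≠ u := fun h => hu (h ▸ hqs)
        rw [Function.update_of_ne hqu] at hq
        exact hqu (hf1 (by simp [hqs]) (by simp) hq)
    · -- InjOn of extension
      obtain ⟨⟨⟨hg1, hg2, hg3⟩, hgQ⟩, hafib⟩ := And.intro ga.1.2 ga.2.2
      have hafib' := ga.2.2
      rw [Finset.mem_sdiff, SimpleGraph.mem_neighborFinset, Finset.mem_image] at hafib'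
      obtain ⟨hadj, hnotim⟩ := hafib'
      intro y hy z hz hyz
      simp only [Finset.coe_insert, Set.mem_insert_iff, Finset.mem_coe] at hy hz
      by_cases hyu : y = u <;> by_cases hzu : z = u
      · rw [hyu, hzu]
      · have hz' : z ∈ s := hz.resolve_left hzu
        rw [hyu, Function.update_self, Function.update_of_ne hzu] at hyz
        exact (hnotim ⟨z, hz', hyz.symm⟩).elim
      · have hy' : y ∈ s := hy.resolve_left hyu
        rw [hzu, Function.update_self, Function.update_of_ne hyu] at hyz
        exact (hnotim ⟨y, hy', hyz⟩).elim
      · have hy' : y ∈ s := hy.resolve_left hyu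
        have hz' : z ∈ s := hz.resolve_left hzu
        rw [Function.update_of_ne hyu, Function.update_of_ne hzu] at hyz
        exact hg1 hy' hz' hyz
    · -- edges of extension
      obtain ⟨⟨hg1, hg2, hg3⟩, hgQ⟩ := ga.1.2
      have hafib' := ga.2.2
      rw [Finset.mem_sdiff, SimpleGraph.mem_neighborFinset] at hafib'
      obtain ⟨hadj, hnotim⟩ := hafib'
      intro x hx y hy hxy
      by_cases hxu : x = u <;> by_cases hyu : y = u
      · rw [hxu, hyu] at hxy; exact absurd hxy (T.irrefl)
      · have hy' : y ∈ s := (Finset.mem_insert.mp hy).resolve_left hyu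
        have hyp : y = p := huniq y hy' (hxu ▸ hxy)
        rw [hxu, Function.update_self, Function.update_of_ne hyu, hyp]
        exact hadj.symm
      · have hx' : x ∈ s := (Finset.mem_insert.mp hx).resolve_left hxu
        have hxp : x = p := huniq x hx' (hyu ▸ hxy).symm
        rw [hyu, Function.update_self, Function.update_of_ne hxu, hxp]
        exact hadj
      · have hx' : x ∈ s := (Finset.mem_insert.mp hx).resolve_left hxu
        have hy' : y ∈ s := (Finset.mem_insert.mp hy).resolve_left hyu
        rw [Function.update_of_ne hxu, Function.update_of_ne hyu]
        exact hg2 x hx' y hy' hxy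
    · -- junk of extension
      obtain ⟨⟨hg1, hg2, hg3⟩, hgQ⟩ := ga.1.2
      intro y hy
      have hyu : y ≠ u := fun h => hy (h ▸ Finset.mem_insert_self u s)
      rw [Function.update_of_ne hyu]
      exact hg3 y (fun h => hy (Finset.mem_insert_of_mem h))
    · -- left inverse
      rintro ⟨f, hf⟩
      apply Subtype.ext
      show Function.update (Function.update f u j₀) u (f u) = f
      rw [Function.update_idem, Function.update_eq_self]
    · -- right inverse
      rintro ⟨⟨g, hg⟩, ⟨a, ha⟩⟩
      have hgu : g u = j₀ := hg.1.2.2 u hu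
      have hupd : Function.update (Function.update g u a) u j₀ = g := by
        rw [Function.update_idem, ← hgu, Function.update_eq_self]
      refine Sigma.ext (Subtype.ext hupd) ?_
      refine (Subtype.heq_iff_coe_eq ?_).mpr ?_
      · intro x
        show x ∈ fib (Function.update (Function.update g u a) u j₀) ↔ x ∈ fib g
        rw [hupd]
      · show Function.update g u a u = a
        rw [Function.update_self]
  rw [Nat.card_congr e, Nat.card_eq_fintype_card, Fintype.card_sigma]
  have : ∀ g : {g : β → Fin n // myPE T G j₀ s g ∧ Q g},
      Fintype.card {a : Fin n // a ∈ fib g.1} = D - d := by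
    intro g
    rw [Fintype.card_coe]
    exact hcard g.1 g.2.1 g.2.2
  rw [Finset.sum_congr rfl (fun g _ => this g), Finset.sum_const, Finset.card_univ,
    Nat.card_eq_fintype_card, smul_eq_mul]

lemma my_true_equiv (P : (β → Fin n) → Prop) :
    Nat.card {f : β → Fin n // P f ∧ True} = Nat.card {f : β → Fin n // P f} :=
  Nat.card_congr (Equiv.subtypeEquivRight (by simp))

lemma my_engineA (hT : T.IsAcyclic) {t : ℕ}
    (hg : (Fintype.card β : ℕ∞) < G.egirth) (hg' : (Fintype.card β : ℕ∞) < G'.egirth)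
    (hdeg : ∀ v, G.degree v = t - 1) (hdeg' : ∀ v, G'.degree v = t - 1) :
    ∀ m (s : Finset β), myConn T s → s.Nonempty → s.card = m →
      Nat.card {f : β → Fin n // myPE T G j₀ s f} =
        Nat.card {f : β → Fin n // myPE T G' j₀ s f} := by
  intro m
  induction m with
  | zero =>
    intro s _ hne hc
    exact absurd (Finset.card_eq_zero.mp hc) (Finset.nonempty_iff_ne_empty.mp hne)
  | succ m ih =>
    intro s hconn hne hcard
    rcases Nat.eq_zero_or_pos m with rfl | hm
    · obtain ⟨x, rfl⟩ := Finset.card_eq_one.mp hcard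
      rw [my_card_singleton, my_card_singleton]
    · obtain ⟨x, hx⟩ := hne
      obtain ⟨u, hus, hux, hconn₀, p, hp, hup, huniq⟩ := my_leaf hT hconn hx (by omega)
      set s₀ := s.erase u with hs₀
      have hins : insert u s₀ = s := Finset.insert_erase hus
      have hu₀ : u ∉ s₀ := Finset.notMem_erase u s
      have hcard₀ : s₀.card = m := by
        rw [hs₀, Finset.card_erase_of_mem hus, hcard]; omega
      have hne₀ : s₀.Nonempty := Finset.card_pos.mp (by omega)
      have h1 : Nat.card {f : β → Fin n // myPE T G j₀ s f} =
          Nat.card {f : β → Fin n // myPE T G j₀ s₀ f} * ((t-1) - (s₀.filter fun q => T.Adj p q).card) := by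
        rw [← hins, ← my_true_equiv (myPE T G j₀ (insert u s₀)),
          my_ext_const hg hconn₀ hu₀ hp hup huniq (fun _ => True) (fun _ _ => Iff.rfl) (t-1)
            (fun g _ _ => hdeg _), my_true_equiv]
      have h2 : Nat.card {f : β → Fin n // myPE T G' j₀ s f} =
          Nat.card {f : β → Fin n // myPE T G' j₀ s₀ f} * ((t-1) - (s₀.filter fun q => T.Adj p q).card) := by
        rw [← hins, ← my_true_equiv (myPE T G' j₀ (insert u s₀)),
          my_ext_const hg' hconn₀ hu₀ hp hup huniq (fun _ => True) (fun _ _ => Iff.rfl) (t-1)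
            (fun g _ _ => hdeg' _), my_true_equiv]
      rw [h1, h2, ih s₀ hconn₀ hne₀ hcard₀]

lemma my_engineB (hT : T.IsAcyclic) {t : ℕ}
    (hg : (Fintype.card β : ℕ∞) < G.egirth) (hg' : (Fintype.card β : ℕ∞) < G'.egirth)
    {w w' : Fin n} (hw : G.degree w = t - 2) (hw' : G'.degree w' = t - 2)
    (hdeg : ∀ v, v ≠ w → G.degree v = t - 1) (hdeg' : ∀ v, v ≠ w' → G'.degree v = t - 1) :
    ∀ m (s : Finset β), myConn T s → s.Nonempty → s.card = m →
      (Nat.card {f : β → Fin n // myPE T G j₀ s f} =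
        Nat.card {f : β → Fin n // myPE T G' j₀ s f}) ∧
      ∀ x ∈ s, Nat.card {f : β → Fin n // myPE T G j₀ s f ∧ f x = w} =
        Nat.card {f : β → Fin n // myPE T G' j₀ s f ∧ f x = w'} := by
  intro m
  induction m with
  | zero =>
    intro s _ hne hc
    exact absurd (Finset.card_eq_zero.mp hc) (Finset.nonempty_iff_ne_empty.mp hne)
  | succ m ih =>
    intro s hconn hne hcard
    rcases Nat.eq_zero_or_pos m with rfl | hm
    · obtain ⟨x, rfl⟩ := Finset.card_eq_one.mp hcard
      refine ⟨by rw [my_card_singleton, my_card_singleton], ?_⟩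
      intro y hy
      simp only [Finset.mem_singleton] at hy
      subst hy
      rw [my_card_singleton_w, my_card_singleton_w]
    constructor
    · -- part (a)
      obtain ⟨x, hx⟩ := hne
      obtain ⟨u, hus, hux, hconn₀, p, hp, hup, huniq⟩ := my_leaf hT hconn hx (by omega)
      set s₀ := s.erase u with hs₀
      have hins : insert u s₀ = s := Finset.insert_erase hus
      have hu₀ : u ∉ s₀ := Finset.notMem_erase u s
      have hcard₀ : s₀.card = m := by rw [hs₀, Finset.card_erase_of_mem hus, hcard]; omega
      have hne₀ : s₀.Nonempty := Finset.card_pos.mp (by omega)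
      have hpu : p ≠ u := fun h => hu₀ (h ▸ hp)
      set d := (s₀.filter fun q => T.Adj p q).card with hd
      obtain ⟨ihN, ihM⟩ := ih s₀ hconn₀ hne₀ hcard₀
      -- split and compute for G
      have hsplitG := my_split (myPE T G j₀ s) (fun f => f p = w)
      have hsplitG₀ := my_split (myPE T G j₀ s₀) (fun f => f p = w)
      have hQw : ∀ (f : β → Fin n) a, Function.update f u a p = f p :=
        fun f a => Function.update_of_ne hpu _ _
      have hc1G : Nat.card {f : β → Fin n // myPE T G j₀ s f ∧ f p = w} =
          Nat.card {g : β → Fin n // myPE T G j₀ s₀ g ∧ g p = w} * ((t-2) - d) := by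
        rw [← hins]
        exact my_ext_const hg hconn₀ hu₀ hp hup huniq (fun f => f p = w) (fun f a => by simp only [hQw]) (t-2)
          (fun g _ hQ => by rw [hQ, hw])
      have hc2G : Nat.card {f : β → Fin n // myPE T G j₀ s f ∧ ¬ f p = w} =
          Nat.card {g : β → Fin n // myPE T G j₀ s₀ g ∧ ¬ g p = w} * ((t-1) - d) := by
        rw [← hins]
        exact my_ext_const hg hconn₀ hu₀ hp hup huniq (fun f => ¬ f p = w) (fun f a => by simp only [hQw]) (t-1)
          (fun g _ hQ => hdeg _ hQ)
      -- split and compute for G'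
      have hsplitG' := my_split (myPE T G' j₀ s) (fun f => f p = w')
      have hsplitG₀' := my_split (myPE T G' j₀ s₀) (fun f => f p = w')
      have hc1G' : Nat.card {f : β → Fin n // myPE T G' j₀ s f ∧ f p = w'} =
          Nat.card {g : β → Fin n // myPE T G' j₀ s₀ g ∧ g p = w'} * ((t-2) - d) := by
        rw [← hins]
        exact my_ext_const hg' hconn₀ hu₀ hp hup huniq (fun f => f p = w') (fun f a => by simp only [hQw]) (t-2)
          (fun g _ hQ => by rw [hQ, hw'])
      have hc2G' : Nat.card {f : β → Fin n // myPE T G' j₀ s f ∧ ¬ f p = w'} =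
          Nat.card {g : β → Fin n // myPE T G' j₀ s₀ g ∧ ¬ g p = w'} * ((t-1) - d) := by
        rw [← hins]
        exact my_ext_const hg' hconn₀ hu₀ hp hup huniq (fun f => ¬ f p = w') (fun f a => by simp only [hQw]) (t-1)
          (fun g _ hQ => hdeg' _ hQ)
      have hMeq := ihM p hp
      have hCeq : Nat.card {g : β → Fin n // myPE T G j₀ s₀ g ∧ ¬ g p = w} =
          Nat.card {g : β → Fin n // myPE T G' j₀ s₀ g ∧ ¬ g p = w'} := by
        have h := hsplitG₀.symm.trans (ihN.trans hsplitG₀')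
        rw [hMeq] at h
        exact Nat.add_left_cancel h
      rw [hsplitG, hsplitG', hc1G, hc2G, hc1G', hc2G', hMeq, hCeq]
    · -- part (b)
      intro x hx
      obtain ⟨u, hus, hux, hconn₀, p, hp, hup, huniq⟩ := my_leaf hT hconn hx (by omega)
      set s₀ := s.erase u with hs₀
      have hins : insert u s₀ = s := Finset.insert_erase hus
      have hu₀ : u ∉ s₀ := Finset.notMem_erase u s
      have hcard₀ : s₀.card = m := by rw [hs₀, Finset.card_erase_of_mem hus, hcard]; omega
      have hne₀ : s₀.Nonempty := Finset.card_pos.mp (by omega)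
      have hx₀ : x ∈ s₀ := Finset.mem_erase.mpr ⟨fun h => hux h.symm, hx⟩
      have hxu : x ≠ u := fun h => hu₀ (h ▸ hx₀)
      set d := (s₀.filter fun q => T.Adj p q).card with hd
      obtain ⟨ihN, ihM⟩ := ih s₀ hconn₀ hne₀ hcard₀
      have hQw : ∀ (f : β → Fin n) a, Function.update f u a x = f x :=
        fun f a => Function.update_of_ne hxu _ _
      set D := if p = x then t - 2 else t - 1 with hD
      have hcG : Nat.card {f : β → Fin n // myPE T G j₀ s f ∧ f x = w} =
          Nat.card {g : β → Fin n // myPE T G j₀ s₀ g ∧ g x = w} * (D - d) := by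
        rw [← hins]
        refine my_ext_const hg hconn₀ hu₀ hp hup huniq (fun f => f x = w) (fun f a => by simp only [hQw]) D ?_
        intro g hgPE hgx
        by_cases hpx : p = x
        · rw [hD, if_pos hpx, hpx, hgx, hw]
        · rw [hD, if_neg hpx]
          refine hdeg _ (fun hgpw => hpx ?_)
          exact hgPE.1 (Finset.mem_coe.mpr hp) (Finset.mem_coe.mpr hx₀) (by rw [hgpw, hgx])
      have hcG' : Nat.card {f : β → Fin n // myPE T G' j₀ s f ∧ f x = w'} =
          Nat.card {g : β → Fin n // myPE T G' j₀ s₀ g ∧ g x = w'} * (D - d) := by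
        rw [← hins]
        refine my_ext_const hg' hconn₀ hu₀ hp hup huniq (fun f => f x = w') (fun f a => by simp only [hQw]) D ?_
        intro g hgPE hgx
        by_cases hpx : p = x
        · rw [hD, if_pos hpx, hpx, hgx, hw']
        · rw [hD, if_neg hpx]
          refine hdeg' _ (fun hgpw => hpx ?_)
          exact hgPE.1 (Finset.mem_coe.mpr hp) (Finset.mem_coe.mpr hx₀) (by rw [hgpw, hgx])
      rw [hcG, hcG', ihM x hx₀]

lemma my_ncard_deg (G : SimpleGraph (Fin n)) [DecidableRel G.Adj] (v : Fin n) :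
    (G.neighborSet v).ncard = G.degree v := by
  have h1 : G.neighborSet v = ↑(G.neighborFinset v) := by
    ext x; simp [SimpleGraph.mem_neighborFinset]
  have h2 := Set.ncard_coe_finset (G.neighborFinset v); rw [← h1] at h2; rw [h2]
  rfl

lemma my_parity {t : ℕ} (ht : 3 ≤ t) (hA : ∀ v, G.degree v = t - 1) {w : Fin n}
    (hw : G'.degree w = t - 2) (hrest : ∀ v, v ≠ w → G'.degree v = t - 1) : False := by
  classical
  obtain ⟨A, h1⟩ : ∃ A, ∑ v, G.degree v = 2 * A := ⟨_, SimpleGraph.sum_degrees_eq_twice_card_edges G⟩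
  obtain ⟨B, h2⟩ : ∃ B, ∑ v, G'.degree v = 2 * B := ⟨_, SimpleGraph.sum_degrees_eq_twice_card_edges G'⟩
  have hn : 0 < n := w.pos
  have e1 : ∑ v, G.degree v = n * (t - 1) := by
    rw [Finset.sum_congr rfl (fun v _ => hA v), Finset.sum_const, Finset.card_univ,
      Fintype.card_fin, smul_eq_mul]
  have e2 : ∑ v, G'.degree v = (n - 1) * (t - 1) + (t - 2) := by
    rw [← Finset.sum_erase_add Finset.univ _ (Finset.mem_univ w), hw]
    congr 1
    rw [Finset.sum_congr rfl (fun v hv => hrest v (Finset.mem_erase.mp hv).1), Finset.sum_const,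
      Finset.card_erase_of_mem (Finset.mem_univ w), Finset.card_univ, Fintype.card_fin,
      smul_eq_mul]
  have e3 : (n - 1) * (t - 1) + (t - 1) = n * (t - 1) := by
    rw [Nat.sub_one_mul]
    have : t - 1 ≤ n * (t - 1) := Nat.le_mul_of_pos_left _ hn
    omega
  rw [e1] at h1
  rw [e2] at h2
  omega

lemma my_pe_univ (T : SimpleGraph β) (G : SimpleGraph (Fin n)) [DecidableRel G.Adj] (j₀ : Fin n) :
    Nat.card {f : β → Fin n // myPE T G j₀ Finset.univ f} =
      Nat.card {f : β → Fin n // Function.Injective f ∧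
        ∀ ⦃a b⦄, T.Adj a b → G.Adj (f a) (f b)} := by
  refine Nat.card_congr (Equiv.subtypeEquivRight (fun f => ?_))
  unfold myPE
  constructor
  · rintro ⟨hinj, hadj, _⟩
    refine ⟨fun a b h => hinj (by simp) (by simp) h, fun a b h => hadj a (by simp) b (by simp) h⟩
  · rintro ⟨hinj, hadj⟩
    exact ⟨fun a _ b _ h => hinj h, fun a _ b _ h => hadj h, fun x hx => absurd (Finset.mem_univ x) hx⟩

lemma my_conn_univ (hT : T.Connected) : myConn T Finset.univ := by
  intro a _ b _
  obtain ⟨w⟩ := hT.preconnected a b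
  exact ⟨w, fun x _ => Finset.mem_univ x⟩

lemma my_copyCount_zero (hne : Nonempty β) (G₀ : SimpleGraph (Fin 0)) (T : SimpleGraph β) :
    Graph.copyCount T G₀ = 0 := by
  have : {G' : G₀.Subgraph | Nonempty (T ≃g G'.coe)} = ∅ := by
    rw [Set.eq_empty_iff_forall_notMem]
    rintro s ⟨e⟩
    exact (e hne.some : s.verts).1.elim0
  rw [Graph.copyCount, this, Set.ncard_empty]

lemma my_uniq_w {t : ℕ} (ht : 3 ≤ t)
    (hd : ∀ v, G.degree v = t - 1 ∨ G.degree v = t - 2)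
    (hd1 : {v : Fin n | (G.neighborSet v).ncard ≠ t - 1}.ncard ≤ 1)
    (hB : ¬ ∀ v, G.degree v = t - 1) :
    ∃ w, G.degree w = t - 2 ∧ ∀ v, v ≠ w → G.degree v = t - 1 := by
  push_neg at hB
  obtain ⟨w, hw⟩ := hB
  have hwdeg : G.degree w = t - 2 := (hd w).resolve_left hw
  refine ⟨w, hwdeg, fun v hv => ?_⟩
  by_contra hvdeg
  have hsub : ({v, w} : Set (Fin n)) ⊆ {v : Fin n | (G.neighborSet v).ncard ≠ t - 1} := by
    rintro x (rfl | rfl)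
    · rwa [Set.mem_setOf_eq, my_ncard_deg]
    · rwa [Set.mem_setOf_eq, my_ncard_deg]
  have h2 : ({v, w} : Set (Fin n)).ncard = 2 := Set.ncard_pair hv
  have := Set.ncard_le_ncard hsub (Set.toFinite _)
  omega

end MyEngine

section Bridge

variable {β : Type*} [Fintype β] (T : SimpleGraph β) {n : ℕ} (G : SimpleGraph (Fin n))

def mySub (f : β → Fin n) (hf : ∀ ⦃a b⦄, T.Adj a b → G.Adj (f a) (f b)) : G.Subgraph where
  verts := Set.range f
  Adj x y := ∃ a b, T.Adj a b ∧ f a = x ∧ f b = y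
  adj_sub := by rintro x y ⟨a, b, hab, rfl, rfl⟩; exact hf hab
  edge_vert := by rintro x y ⟨a, b, hab, rfl, rfl⟩; exact ⟨a, rfl⟩
  symm := ⟨by rintro x y ⟨a, b, hab, rfl, rfl⟩; exact ⟨b, a, hab.symm, rfl, rfl⟩⟩

noncomputable def myIso (f : β → Fin n) (hinj : Function.Injective f)
    (hf : ∀ ⦃a b⦄, T.Adj a b → G.Adj (f a) (f b)) : T ≃g (mySub T G f hf).coe where
  toEquiv := Equiv.ofBijective (fun a => ⟨f a, a, rfl⟩)
    ⟨fun a b h => hinj (congrArg Subtype.val h), by rintro ⟨x, a, rfl⟩; exact ⟨a, rfl⟩⟩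
  map_rel_iff' := by
    intro a b
    constructor
    · rintro ⟨a', b', hab, ha, hb⟩
      exact (hinj ha) ▸ (hinj hb) ▸ hab
    · intro h
      exact ⟨a, b, h, rfl, rfl⟩

lemma myf_inj (s' : G.Subgraph) (e : T ≃g s'.coe) :
    Function.Injective (fun a => ((e a : s'.verts) : Fin n)) := by
  intro a b h
  exact e.injective (Subtype.ext h)

lemma myf_hom (s' : G.Subgraph) (e : T ≃g s'.coe) :
    ∀ ⦃a b⦄, T.Adj a b → G.Adj ((e a : s'.verts) : Fin n) ((e b : s'.verts) : Fin n) := by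
  intro a b h
  exact (s'.adj_sub (e.map_rel_iff.mpr h : s'.coe.Adj (e a) (e b)))

lemma mySub_eq (s' : G.Subgraph) (e : T ≃g s'.coe) :
    mySub T G (fun a => ((e a : s'.verts) : Fin n)) (myf_hom T G s' e) = s' := by
  apply SimpleGraph.Subgraph.ext
  · ext x
    constructor
    · rintro ⟨a, rfl⟩; exact (e a).2
    · intro hx
      exact ⟨e.symm ⟨x, hx⟩, by simp⟩
  · ext x y
    constructor
    · rintro ⟨a, b, hab, rfl, rfl⟩
      exact (e.map_rel_iff.mpr hab : s'.coe.Adj (e a) (e b))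
    · intro h
      have hx : x ∈ s'.verts := s'.edge_vert h
      have hy : y ∈ s'.verts := s'.edge_vert h.symm
      refine ⟨e.symm ⟨x, hx⟩, e.symm ⟨y, hy⟩, ?_, by simp, by simp⟩
      have : s'.coe.Adj ⟨x, hx⟩ ⟨y, hy⟩ := h
      have h2 := e.symm.map_rel_iff.mpr this
      exact h2

def myCoeCast {H₁ H₂ : G.Subgraph} (h : H₁ = H₂) : H₁.coe ≃g H₂.coe := by
  subst h; exact RelIso.refl _

lemma myCoeCast_val {H₁ H₂ : G.Subgraph} (h : H₁ = H₂) (x : H₁.verts) :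
    ((myCoeCast G h x : H₂.verts) : Fin n) = (x : Fin n) := by
  subst h; rfl

lemma my_fiber (s' : G.Subgraph) (e : T ≃g s'.coe) :
    Nat.card {f : {f : β → Fin n // Function.Injective f ∧
        ∀ ⦃a b⦄, T.Adj a b → G.Adj (f a) (f b)} // mySub T G f.1 f.2.2 = s'} =
      Nat.card (T ≃g T) := by
  refine Nat.card_congr ⟨fun p => (myIso T G p.1.1 p.1.2.1 p.1.2.2).trans
    ((myCoeCast G p.2).trans e.symm), fun φ => ⟨⟨fun a => (((φ.trans e) a : s'.verts) : Fin n),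
      myf_inj T G s' (φ.trans e), myf_hom T G s' (φ.trans e)⟩, mySub_eq T G s' (φ.trans e)⟩,
    ?_, ?_⟩
  · rintro ⟨⟨f, hinj, hhom⟩, hsub⟩
    apply Subtype.ext
    apply Subtype.ext
    funext a
    show ((e ((e.symm (myCoeCast G hsub (myIso T G f hinj hhom a)))) : s'.verts) : Fin n) = f a
    rw [RelIso.apply_symm_apply]
    rw [myCoeCast_val]
    rfl
  · intro φ
    apply RelIso.ext
    intro a
    have hX : (myCoeCast G (mySub_eq T G s' (φ.trans e))
        (myIso T G (fun a => (((φ.trans e) a : s'.verts) : Fin n))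
          (myf_inj T G s' (φ.trans e)) (myf_hom T G s' (φ.trans e)) a)) =
        e (φ a) := by
      apply Subtype.ext
      rw [myCoeCast_val]
      rfl
    show e.symm ((myCoeCast G (mySub_eq T G s' (φ.trans e)))
        ((myIso T G (fun a => (((φ.trans e) a : s'.verts) : Fin n))
          (myf_inj T G s' (φ.trans e)) (myf_hom T G s' (φ.trans e))) a)) = φ a
    rw [hX, RelIso.symm_apply_apply]

lemma my_finite_subgraph : Finite G.Subgraph := by
  apply Finite.of_injective (fun H : G.Subgraph => (H.verts, H.Adj))
  intro H₁ H₂ h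
  apply SimpleGraph.Subgraph.ext
  · exact congrArg Prod.fst h
  · exact congrArg Prod.snd h

lemma my_bridge :
    Graph.copyCount T G * Nat.card (T ≃g T) =
      Nat.card {f : β → Fin n // Function.Injective f ∧
        ∀ ⦃a b⦄, T.Adj a b → G.Adj (f a) (f b)} := by
  classical
  haveI : Finite G.Subgraph := my_finite_subgraph G
  set S := {G'' : G.Subgraph | Nonempty (T ≃g G''.coe)} with hS
  set E := {f : β → Fin n // Function.Injective f ∧
    ∀ ⦃a b⦄, T.Adj a b → G.Adj (f a) (f b)} with hE
  haveI : Finite (T ≃g T) :=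
    Finite.of_injective (fun φ => (φ.toEquiv : Equiv.Perm β)) RelIso.toEquiv_injective
  haveI : Fintype (T ≃g T) := Fintype.ofFinite _
  haveI : Fintype G.Subgraph := Fintype.ofFinite _
  haveI : Fintype ↥S := Fintype.ofFinite _
  let Φ : E → ↥S := fun f => ⟨mySub T G f.1 f.2.2, ⟨myIso T G f.1 f.2.1 f.2.2⟩⟩
  have e1 : E ≃ Σ s : ↥S, {f : E // Φ f = s} := (Equiv.sigmaFiberEquiv Φ).symm
  have hfib : ∀ s : ↥S, Nat.card {f : E // Φ f = s} = Nat.card (T ≃g T) := by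
    rintro ⟨s', hs'⟩
    have e := Classical.choice hs'
    rw [Nat.card_congr (Equiv.subtypeEquivRight (fun f => ?_))]
    · exact my_fiber T G s' e
    · exact ⟨fun h => congrArg Subtype.val h, fun h => Subtype.ext h⟩
  rw [show Nat.card E = Fintype.card E from Nat.card_eq_fintype_card,
    Fintype.card_congr e1, Fintype.card_sigma]
  have : ∀ s : ↥S, Fintype.card {f : E // Φ f = s} = Nat.card (T ≃g T) := by
    intro s
    rw [← Nat.card_eq_fintype_card, hfib s]
  rw [Finset.sum_congr rfl (fun s _ => this s), Finset.sum_const, Finset.card_univ, smul_eq_mul]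
  congr 1
  rw [← Nat.card_eq_fintype_card, Nat.card_coe_set_eq]
  rfl

end Bridge

/-- for a tree `T` and `t ≥ 3`, any two `n`-vertex graphs of girth greater
than `|V(T)|` in which at least `n-1` vertices have degree `t-1` and any remaining vertex
has degree `t-1` or `t-2` contain the same number of copies of `T`. -/
theorem stmt_12 {β : Type*} [Fintype β] (T : SimpleGraph β) (hT : T.IsTree)
    (t : ℕ) (ht : 3 ≤ t) (n : ℕ) (G G' : SimpleGraph (Fin n))
    (hg : (Fintype.card β : ℕ∞) < G.egirth)
    (hg' : (Fintype.card β : ℕ∞) < G'.egirth)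
    (hd : ∀ v, (G.neighborSet v).ncard = t - 1 ∨ (G.neighborSet v).ncard = t - 2)
    (hd1 : {v : Fin n | (G.neighborSet v).ncard ≠ t - 1}.ncard ≤ 1)
    (hd' : ∀ v, (G'.neighborSet v).ncard = t - 1 ∨ (G'.neighborSet v).ncard = t - 2)
    (hd1' : {v : Fin n | (G'.neighborSet v).ncard ≠ t - 1}.ncard ≤ 1) :
    Graph.copyCount T G = Graph.copyCount T G' := by
  classical
  have hne : Nonempty β := hT.isConnected.nonempty
  haveI := hne
  rcases Nat.eq_zero_or_pos n with rfl | hn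
  · rw [my_copyCount_zero hne G T, my_copyCount_zero hne G' T]
  · have hdG : ∀ v, G.degree v = t - 1 ∨ G.degree v = t - 2 := fun v => by
      rw [← my_ncard_deg]; exact hd v
    have hdG' : ∀ v, G'.degree v = t - 1 ∨ G'.degree v = t - 2 := fun v => by
      rw [← my_ncard_deg]; exact hd' v
    have hAutfin : Finite (T ≃g T) :=
      Finite.of_injective (fun φ => (φ.toEquiv : Equiv.Perm β)) RelIso.toEquiv_injective
    have hAutpos : 0 < Nat.card (T ≃g T) := @Nat.card_pos _ ⟨RelIso.refl T.Adj⟩ hAutfin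
    have hconnU := my_conn_univ hT.isConnected
    have huNE : (Finset.univ : Finset β).Nonempty := Finset.univ_nonempty
    set j₀ : Fin n := ⟨0, hn⟩ with hj
    have key : Nat.card {f : β → Fin n // Function.Injective f ∧
          ∀ ⦃a b⦄, T.Adj a b → G.Adj (f a) (f b)} =
        Nat.card {f : β → Fin n // Function.Injective f ∧
          ∀ ⦃a b⦄, T.Adj a b → G'.Adj (f a) (f b)} := by
      rw [← my_pe_univ T G j₀, ← my_pe_univ T G' j₀]
      by_cases hA : ∀ v, G.degree v = t - 1
      · by_cases hA' : ∀ v, G'.degree v = t - 1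
        · exact my_engineA hT.IsAcyclic hg hg' hA hA' Finset.univ.card Finset.univ hconnU huNE rfl
        · obtain ⟨w', hw', hrest'⟩ := my_uniq_w ht hdG' hd1' hA'
          exact (my_parity ht hA hw' hrest').elim
      · obtain ⟨w, hw, hrest⟩ := my_uniq_w ht hdG hd1 hA
        by_cases hA' : ∀ v, G'.degree v = t - 1
        · exact (my_parity ht hA' hw hrest).elim
        · obtain ⟨w', hw', hrest'⟩ := my_uniq_w ht hdG' hd1' hA'
          exact (my_engineB hT.IsAcyclic hg hg' hw hw' hrest hrest'
            Finset.univ.card Finset.univ hconnU huNE rfl).1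
    have b1 := my_bridge T G
    have b2 := my_bridge T G'
    exact Nat.eq_of_mul_eq_mul_right hAutpos (b1.trans (key.trans b2.symm))
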